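/- Let l and h be positive integers. The map N : ℤ⁺ × ℤ⁺ → ℤ⁺ defined by N(i,j) = (l·h/2)·((R+S)² + 3R + S) + l·(i - h·R - S - 1) + j, where R = ⌊(i-1)/h⌋ and S = ⌊(j-1)/l⌋, is a bijection from the set of pairs of positive integers onto the positive integers. -/

import Mathlib

private def tri (n : ℕ) : ℕ := n * (n + 1) / 2

private lemma two_tri (n : ℕ) : 2 * tri n = n * (n + 1) :=
  Nat.mul_div_cancel' ((Nat.even_mul_succ_self n).two_dvd)

private lemma tri_succ (n : ℕ) : tri (n + 1) = tri n + (n + 1) := by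
  have h1 := two_tri n
  have h2 : 2 * tri (n + 1) = (n + 1) * (n + 2) := by rw [two_tri]
  have h3 : (n + 1) * (n + 2) = n * (n + 1) + 2 * (n + 1) := by ring
  omega

private lemma tri_mono : Monotone tri := fun a b hab =>
  Nat.div_le_div_right (Nat.mul_le_mul hab (by omega))

private def cantor (a b : ℕ) : ℕ := tri (a + b) + a

private lemma two_cantor (a b : ℕ) : 2 * cantor a b = (a + b) * (a + b + 1) + 2 * a := by
  have := two_tri (a + b); unfold cantor; omega

private lemma cantor_lt (a b : ℕ) : cantor a b < tri (a + b + 1) := by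
  have := tri_succ (a + b); unfold cantor; omega

private lemma cantor_inj {a b a' b' : ℕ} (h : cantor a b = cantor a' b') :
    a = a' ∧ b = b' := by
  have hsum : a + b = a' + b' := by
    rcases lt_trichotomy (a + b) (a' + b') with hlt | he | hgt
    · have h1 := cantor_lt a b
      have h2 : tri (a + b + 1) ≤ tri (a' + b') := tri_mono hlt
      have : tri (a' + b') ≤ cantor a' b' := Nat.le_add_right _ _
      omega
    · exact he
    · have h1 := cantor_lt a' b'
      have h2 : tri (a' + b' + 1) ≤ tri (a + b) := tri_mono hgt
      have : tri (a + b) ≤ cantor a b := Nat.le_add_right _ _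
      omega
  unfold cantor at h
  rw [hsum] at h
  omega

private lemma cantor_surj (n : ℕ) : ∃ a b, cantor a b = n := by
  induction n with
  | zero => exact ⟨0, 0, rfl⟩
  | succ n ih =>
    obtain ⟨a, b, h⟩ := ih
    cases b with
    | zero =>
      refine ⟨0, a + 1, ?_⟩
      have := tri_succ a
      unfold cantor at h ⊢
      simp only [Nat.zero_add, Nat.add_zero] at *
      omega
    | succ b' =>
      refine ⟨a + 1, b', ?_⟩
      unfold cantor at h ⊢
      have hs : a + 1 + b' = a + (b' + 1) := by omega
      rw [hs]
      omega

private def g (L H a b : ℕ) : ℕ := L * H * cantor (a / H) (b / L) + (L * (a % H) + b % L)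

private lemma rem_lt {L H : ℕ} (hL : 0 < L) (hH : 0 < H) (a b : ℕ) :
    L * (a % H) + b % L < L * H := by
  have h1 : b % L < L := Nat.mod_lt _ hL
  have h2 : a % H + 1 ≤ H := Nat.mod_lt _ hH
  have h3 : L * (a % H + 1) ≤ L * H := Nat.mul_le_mul_left L h2
  have h4 : L * (a % H + 1) = L * (a % H) + L := by ring
  omega

private lemma mul_add_inj {m c r c' r' : ℕ} (hr : r < m) (hr' : r' < m)
    (h : m * c + r = m * c' + r') : c = c' ∧ r = r' := by
  have h1 : (m * c + r) / m = c := by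
    rw [Nat.mul_add_div (by omega), Nat.div_eq_of_lt hr]; omega
  have h2 : (m * c' + r') / m = c' := by
    rw [Nat.mul_add_div (by omega), Nat.div_eq_of_lt hr']; omega
  have hc : c = c' := by rw [← h1, ← h2, h]
  constructor
  · exact hc
  · subst hc; omega

private lemma g_inj {L H : ℕ} (hL : 0 < L) (hH : 0 < H) {a b a' b' : ℕ}
    (h : g L H a b = g L H a' b') : a = a' ∧ b = b' := by
  unfold g at h
  obtain ⟨hc, hr⟩ := mul_add_inj (rem_lt hL hH a b) (rem_lt hL hH a' b') h
  obtain ⟨hq1, hq2⟩ := cantor_inj hc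
  have hbL : b % L < L := Nat.mod_lt _ hL
  have hbL' : b' % L < L := Nat.mod_lt _ hL
  obtain ⟨hm1, hm2⟩ := mul_add_inj hbL hbL' hr
  have d1 := Nat.div_add_mod a H
  have d2 := Nat.div_add_mod a' H
  have d3 := Nat.div_add_mod b L
  have d4 := Nat.div_add_mod b' L
  constructor
  · rw [← d1, ← d2, hq1, hm1]
  · rw [← d3, ← d4, hq2, hm2]

private lemma g_surj {L H : ℕ} (hL : 0 < L) (hH : 0 < H) (n : ℕ) :
    ∃ a b, g L H a b = n := by
  obtain ⟨x, y, hxy⟩ := cantor_surj (n / (L * H))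
  set r := n % (L * H) with hr
  have hrlt : r < L * H := Nat.mod_lt _ (by positivity)
  have hu : r / L < H := by
    rw [Nat.div_lt_iff_lt_mul hL, Nat.mul_comm]; exact hrlt
  have hv : r % L < L := Nat.mod_lt _ hL
  refine ⟨H * x + r / L, L * y + r % L, ?_⟩
  unfold g
  have e1 : (H * x + r / L) / H = x := by
    rw [Nat.mul_add_div hH, Nat.div_eq_of_lt hu]; omega
  have e2 : (H * x + r / L) % H = r / L := by
    rw [Nat.mul_add_mod, Nat.mod_eq_of_lt hu]
  have e3 : (L * y + r % L) / L = y := by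
    rw [Nat.mul_add_div hL, Nat.div_eq_of_lt hv]; omega
  have e4 : (L * y + r % L) % L = r % L := by
    rw [Nat.mul_add_mod, Nat.mod_eq_of_lt hv]
  rw [e1, e2, e3, e4, hxy, Nat.div_add_mod, hr, Nat.div_add_mod]


/-- Generalized Cantor diagonalization by rectangular blocks of length `l` and height `h`:
`N(i,j) = (l·h/2)·((R+S)² + 3R + S) + l·(i - h·R - S - 1) + j`, where
`R = ⌊(i-1)/h⌋` and `S = ⌊(j-1)/l⌋`.
(`(R+S)² + 3R + S` is always even, so multiplying by `l·h/2` is the same as exact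
division of the whole product by `2`; for positive `i, j` and positive `l, h` the
integer divisions `(i-1)/h`, `(j-1)/l` compute the floors.) -/
def N (l h i j : ℤ) : ℤ :=
  l * h * (((i - 1) / h + (j - 1) / l) ^ 2 + 3 * ((i - 1) / h) + (j - 1) / l) / 2 +
    l * (i - h * ((i - 1) / h) - (j - 1) / l - 1) + j

private lemma N_eq (l h : ℤ) (hl : 0 < l) (hh : 0 < h) (i j : ℤ) (hi : 0 < i) (hj : 0 < j) :
    N l h i j = (g l.toNat h.toNat (i - 1).toNat (j - 1).toNat : ℤ) + 1 := by
  set L := l.toNat with hLdef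
  set H := h.toNat with hHdef
  set A := (i - 1).toNat with hAdef
  set B := (j - 1).toNat with hBdef
  have hLl : (L : ℤ) = l := Int.toNat_of_nonneg hl.le
  have hHh : (H : ℤ) = h := Int.toNat_of_nonneg hh.le
  have hA : (A : ℤ) = i - 1 := Int.toNat_of_nonneg (by omega)
  have hB : (B : ℤ) = j - 1 := Int.toNat_of_nonneg (by omega)
  set X := A / H with hXdef
  set Y := B / L with hYdef
  set rA := A % H with hrAdef
  set rB := B % L with hrBdef
  have hdiv1 : (i - 1) / h = ((X : ℕ) : ℤ) := by
    rw [hXdef, Int.natCast_ediv, hA, hHh]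
  have hdiv2 : (j - 1) / l = ((Y : ℕ) : ℤ) := by
    rw [hYdef, Int.natCast_ediv, hB, hLl]
  have eA : i - 1 = h * (X : ℤ) + (rA : ℤ) := by
    have := Nat.div_add_mod A H
    have hcast : (A : ℤ) = (H : ℤ) * (X : ℤ) + (rA : ℤ) := by exact_mod_cast congrArg (Nat.cast : ℕ → ℤ) this.symm
    rw [← hA, hcast, hHh]
  have eB : j - 1 = l * (Y : ℤ) + (rB : ℤ) := by
    have := Nat.div_add_mod B L
    have hcast : (B : ℤ) = (L : ℤ) * (Y : ℤ) + (rB : ℤ) := by exact_mod_cast congrArg (Nat.cast : ℕ → ℤ) this.symm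
    rw [← hB, hcast, hLl]
  have e2c : ((X : ℤ) + (Y : ℤ)) ^ 2 + 3 * (X : ℤ) + (Y : ℤ) = 2 * ((cantor X Y : ℕ) : ℤ) := by
    have := two_cantor X Y
    have hcast : (2 : ℤ) * (cantor X Y : ℤ) = ((X : ℤ) + Y) * ((X : ℤ) + Y + 1) + 2 * X := by
      exact_mod_cast congrArg (Nat.cast : ℕ → ℤ) this
    rw [hcast]; ring
  unfold N
  rw [hdiv1, hdiv2, e2c,
    show l * h * (2 * ((cantor X Y : ℕ) : ℤ)) = 2 * (l * h * ((cantor X Y : ℕ) : ℤ)) by ring,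
    Int.mul_ediv_cancel_left _ two_ne_zero]
  have emA : ((rA : ℕ) : ℤ) = (A : ℤ) % h := by rw [hrAdef, Int.natCast_emod, hHh]
  have emB : ((rB : ℕ) : ℤ) = (B : ℤ) % l := by rw [hrBdef, Int.natCast_emod, hLl]
  unfold g
  push_cast
  rw [hLl, hHh]
  linear_combination l * eA + eB + l * emA + emB

/-- For positive integers `l` and `h`, the map `N` is a bijection from the set of pairs
of positive integers onto the positive integers. -/
theorem rectangle_enumeration_bijOn (l h : ℤ) (hl : 0 < l) (hh : 0 < h) :
    Set.BijOn (fun p : ℤ × ℤ => N l h p.1 p.2)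
      {p : ℤ × ℤ | 0 < p.1 ∧ 0 < p.2} {n : ℤ | 0 < n} := by
  have hL : 0 < l.toNat := by omega
  have hH : 0 < h.toNat := by omega
  refine ⟨?_, ?_, ?_⟩
  · intro p hp
    obtain ⟨hp1, hp2⟩ := hp
    simp only [Set.mem_setOf_eq]
    rw [N_eq l h hl hh p.1 p.2 hp1 hp2]
    positivity
  · intro p hp q hq hpq
    obtain ⟨hp1, hp2⟩ := hp
    obtain ⟨hq1, hq2⟩ := hq
    simp only at hpq
    rw [N_eq l h hl hh _ _ hp1 hp2, N_eq l h hl hh _ _ hq1 hq2] at hpq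
    have hg : g l.toNat h.toNat (p.1 - 1).toNat (p.2 - 1).toNat
        = g l.toNat h.toNat (q.1 - 1).toNat (q.2 - 1).toNat := by exact_mod_cast
      (by omega : ((g l.toNat h.toNat (p.1 - 1).toNat (p.2 - 1).toNat : ℕ) : ℤ)
        = ((g l.toNat h.toNat (q.1 - 1).toNat (q.2 - 1).toNat : ℕ) : ℤ))
    obtain ⟨h1, h2⟩ := g_inj hL hH hg
    have e1 : p.1 = q.1 := by omega
    have e2 : p.2 = q.2 := by omega
    exact Prod.ext_iff.mpr ⟨e1, e2⟩
  · intro n hn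
    simp only [Set.mem_setOf_eq] at hn
    obtain ⟨a, b, hab⟩ := g_surj hL hH (n - 1).toNat
    refine ⟨((a : ℤ) + 1, (b : ℤ) + 1), ⟨by positivity, by positivity⟩, ?_⟩
    simp only
    rw [N_eq l h hl hh _ _ (by positivity) (by positivity),
      show ((a : ℤ) + 1 - 1).toNat = a from by omega,
      show ((b : ℤ) + 1 - 1).toNat = b from by omega, hab]
    omega
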